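/- arXiv:1504.07907 — 2 statements merged into one kernel-verified Lean document; each statement's English description precedes it below -/
import Mathlib

section
/- Let F be a symmetric fourth-order tensor on ℝⁿ with multilinear form F⁴ and convex score function S⁴(x) = F⁴(x,x,x,x). Then for all x,y ∈ ℝⁿ: 2 F⁴(x,x,y,y) ≤ F⁴(x,x,x,x) + F⁴(y,y,y,y). -/
/-- A fourth-order tensor is symmetric if its entries are invariant under any
permutation of the indices. -/
def Sym4 {n : ℕ} (F : Fin n → Fin n → Fin n → Fin n → ℝ) : Prop :=
  ∀ (σ : Equiv.Perm (Fin 4)) (v : Fin 4 → Fin n),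
    F (v (σ 0)) (v (σ 1)) (v (σ 2)) (v (σ 3)) = F (v 0) (v 1) (v 2) (v 3)

/-- The multilinear form associated to a fourth-order tensor. -/
def mform4 {n : ℕ} (F : Fin n → Fin n → Fin n → Fin n → ℝ)
    (x y z t : Fin n → ℝ) : ℝ :=
  ∑ i, ∑ j, ∑ k, ∑ l, F i j k l * x i * y j * z k * t l

section Aux

variable {n : ℕ} {F : Fin n → Fin n → Fin n → Fin n → ℝ}

lemma entry01 (hF : Sym4 F) (i j k l : Fin n) : F j i k l = F i j k l := by
  simpa [Equiv.swap_apply_def] using hF (Equiv.swap 0 1) ![i, j, k, l]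

lemma entry12 (hF : Sym4 F) (i j k l : Fin n) : F i k j l = F i j k l := by
  simpa [Equiv.swap_apply_def] using hF (Equiv.swap 1 2) ![i, j, k, l]

lemma entry23 (hF : Sym4 F) (i j k l : Fin n) : F i j l k = F i j k l := by
  simpa [Equiv.swap_apply_def] using hF (Equiv.swap 2 3) ![i, j, k, l]

lemma s12 (hF : Sym4 F) (x y z t : Fin n → ℝ) :
    mform4 F x y z t = mform4 F y x z t := by
  unfold mform4
  rw [Finset.sum_comm]
  refine Finset.sum_congr rfl fun j _ => Finset.sum_congr rfl fun i _ =>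
    Finset.sum_congr rfl fun k _ => Finset.sum_congr rfl fun l _ => ?_
  rw [entry01 hF]; ring

lemma s23 (hF : Sym4 F) (x y z t : Fin n → ℝ) :
    mform4 F x y z t = mform4 F x z y t := by
  unfold mform4
  refine Finset.sum_congr rfl fun i _ => ?_
  rw [Finset.sum_comm]
  refine Finset.sum_congr rfl fun k _ => Finset.sum_congr rfl fun j _ =>
    Finset.sum_congr rfl fun l _ => ?_
  rw [entry12 hF]; ring

lemma s34 (hF : Sym4 F) (x y z t : Fin n → ℝ) :
    mform4 F x y z t = mform4 F x y t z := by
  unfold mform4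
  refine Finset.sum_congr rfl fun i _ => Finset.sum_congr rfl fun j _ => ?_
  rw [Finset.sum_comm]
  refine Finset.sum_congr rfl fun l _ => Finset.sum_congr rfl fun k _ => ?_
  rw [entry23 hF]; ring

/-- canonical form of the one-`b` patterns -/
lemma p_aaba (hF : Sym4 F) (a b : Fin n → ℝ) :
    mform4 F a a b a = mform4 F a a a b := s34 hF a a b a

lemma p_abaa (hF : Sym4 F) (a b : Fin n → ℝ) :
    mform4 F a b a a = mform4 F a a a b := by
  rw [s23 hF, p_aaba hF]

lemma p_baaa (hF : Sym4 F) (a b : Fin n → ℝ) :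
    mform4 F b a a a = mform4 F a a a b := by
  rw [s12 hF, p_abaa hF]

/-- canonical form of the two-`b` patterns -/
lemma p_abab (hF : Sym4 F) (a b : Fin n → ℝ) :
    mform4 F a b a b = mform4 F a a b b := s23 hF a b a b

lemma p_abba (hF : Sym4 F) (a b : Fin n → ℝ) :
    mform4 F a b b a = mform4 F a a b b := by
  rw [s34 hF, p_abab hF]

lemma p_baab (hF : Sym4 F) (a b : Fin n → ℝ) :
    mform4 F b a a b = mform4 F a a b b := by
  rw [s12 hF, p_abab hF]

lemma p_baba (hF : Sym4 F) (a b : Fin n → ℝ) :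
    mform4 F b a b a = mform4 F a a b b := by
  rw [s12 hF, p_abba hF]

lemma p_bbaa (hF : Sym4 F) (a b : Fin n → ℝ) :
    mform4 F b b a a = mform4 F a a b b := by
  rw [s23 hF, p_baba hF]

/-- canonical form of the three-`b` patterns -/
lemma p_babb (hF : Sym4 F) (a b : Fin n → ℝ) :
    mform4 F b a b b = mform4 F a b b b := s12 hF b a b b

lemma p_bbab (hF : Sym4 F) (a b : Fin n → ℝ) :
    mform4 F b b a b = mform4 F a b b b := by
  rw [s23 hF, p_babb hF]

lemma p_bbba (hF : Sym4 F) (a b : Fin n → ℝ) :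
    mform4 F b b b a = mform4 F a b b b := by
  rw [s34 hF, p_bbab hF]

lemma expandS (a b : Fin n → ℝ) (t : ℝ) :
    mform4 F (a + t • b) (a + t • b) (a + t • b) (a + t • b) =
      mform4 F a a a a
      + t * mform4 F a a a b + t * mform4 F a a b a + t * mform4 F a b a a
      + t * mform4 F b a a a
      + t ^ 2 * mform4 F a a b b + t ^ 2 * mform4 F a b a b + t ^ 2 * mform4 F a b b a
      + t ^ 2 * mform4 F b a a b + t ^ 2 * mform4 F b a b a + t ^ 2 * mform4 F b b a a
      + t ^ 3 * mform4 F a b b b + t ^ 3 * mform4 F b a b b + t ^ 3 * mform4 F b b a b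
      + t ^ 3 * mform4 F b b b a
      + t ^ 4 * mform4 F b b b b := by
  unfold mform4
  simp only [Pi.add_apply, Pi.smul_apply, smul_eq_mul, Finset.mul_sum,
    ← Finset.sum_add_distrib]
  refine Finset.sum_congr rfl fun i _ => Finset.sum_congr rfl fun j _ =>
    Finset.sum_congr rfl fun k _ => Finset.sum_congr rfl fun l _ => ?_
  ring

lemma expandE (x y : Fin n → ℝ) :
    mform4 F (x + y) (x + y) (x - y) (x - y) =
      mform4 F x x x x
      + (-1) * mform4 F x x x y + (-1) * mform4 F x x y x + mform4 F x x y y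
      + mform4 F x y x x + (-1) * mform4 F x y x y + (-1) * mform4 F x y y x
      + mform4 F x y y y
      + mform4 F y x x x + (-1) * mform4 F y x x y + (-1) * mform4 F y x y x
      + mform4 F y x y y
      + mform4 F y y x x + (-1) * mform4 F y y x y + (-1) * mform4 F y y y x
      + mform4 F y y y y := by
  unfold mform4
  simp only [Pi.add_apply, Pi.sub_apply, Finset.mul_sum, ← Finset.sum_add_distrib]
  refine Finset.sum_congr rfl fun i _ => Finset.sum_congr rfl fun j _ =>
    Finset.sum_congr rfl fun k _ => Finset.sum_congr rfl fun l _ => ?_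
  ring

/-- Sum of the score at `a + t b` and `a - t b`. -/
lemma sum_sym (hF : Sym4 F) (a b : Fin n → ℝ) (t : ℝ) :
    mform4 F (a + t • b) (a + t • b) (a + t • b) (a + t • b)
      + mform4 F (a - t • b) (a - t • b) (a - t • b) (a - t • b) =
      2 * mform4 F a a a a + 12 * t ^ 2 * mform4 F a a b b
        + 2 * t ^ 4 * mform4 F b b b b := by
  have hsub : a - t • b = a + (-t) • b := by
    funext i; simp [sub_eq_add_neg]
  rw [hsub, expandS a b t, expandS a b (-t)]
  linear_combination (2 * t ^ 2) * p_abab hF a b + (2 * t ^ 2) * p_abba hF a b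
    + (2 * t ^ 2) * p_baab hF a b + (2 * t ^ 2) * p_baba hF a b
    + (2 * t ^ 2) * p_bbaa hF a b

/-- Convexity of the score gives positivity of `F(a,a,b,b)`. -/
lemma m2_nonneg (hF : Sym4 F)
    (hconv : ConvexOn ℝ Set.univ (fun x : Fin n → ℝ => mform4 F x x x x))
    (a b : Fin n → ℝ) : 0 ≤ mform4 F a a b b := by
  set M2 := mform4 F a a b b with hM2
  set Sb := mform4 F b b b b with hSb
  have key : ∀ t : ℝ, 0 ≤ 12 * t ^ 2 * M2 + 2 * t ^ 4 * Sb := by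
    intro t
    have hmid : (1/2 : ℝ) • (a + t • b) + (1/2 : ℝ) • (a - t • b) = a := by
      funext i; simp [Pi.smul_apply]; ring
    have h := hconv.2 (Set.mem_univ (a + t • b)) (Set.mem_univ (a - t • b))
      (by norm_num : (0:ℝ) ≤ 1/2) (by norm_num : (0:ℝ) ≤ 1/2) (by norm_num)
    simp only [hmid, smul_eq_mul] at h
    have hs := sum_sym hF a b t
    rw [← hM2, ← hSb] at hs
    nlinarith [h, hs]
  by_contra hneg
  push_neg at hneg
  rcases le_or_gt Sb 0 with hSb0 | hSb0
  · have h1 := key 1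
    nlinarith
  · set t := Real.sqrt (-3 * M2 / Sb) with ht
    have hpos : 0 < -3 * M2 / Sb := by
      apply div_pos (by linarith) hSb0
    have ht2 : t ^ 2 = -3 * M2 / Sb := Real.sq_sqrt hpos.le
    have htpos : 0 < t ^ 2 := by rw [ht2]; exact hpos
    have h2 : t ^ 2 * Sb = -3 * M2 := by
      rw [ht2]; field_simp
    have hk := key t
    nlinarith [hk, htpos, h2]

end Aux

/-- If the score function of a symmetric fourth-order tensor is convex, then
`2 F⁴(x,x,y,y) ≤ F⁴(x,x,x,x) + F⁴(y,y,y,y)`. -/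
theorem stmt_6 {n : ℕ} (F : Fin n → Fin n → Fin n → Fin n → ℝ) (hF : Sym4 F)
    (hconv : ConvexOn ℝ Set.univ (fun x : Fin n → ℝ => mform4 F x x x x)) :
    ∀ x y : Fin n → ℝ,
      2 * mform4 F x x y y ≤ mform4 F x x x x + mform4 F y y y y := by
  intro x y
  have h0 := m2_nonneg hF hconv (x + y) (x - y)
  have hE : mform4 F (x + y) (x + y) (x - y) (x - y) =
      mform4 F x x x x + mform4 F y y y y - 2 * mform4 F x x y y := by
    rw [expandE x y]
    linear_combination (-1 : ℝ) * p_aaba hF x y + p_abaa hF x y + p_baaa hF x y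
      - p_abab hF x y - p_abba hF x y - p_baab hF x y - p_baba hF x y
      + p_bbaa hF x y
      + p_babb hF x y - p_bbab hF x y - p_bbba hF x y
  rw [hE] at h0
  linarith
end

section
/- Let F be a symmetric fourth-order tensor on ℝⁿ with multilinear form F⁴ and suppose the score function S⁴(x) = F⁴(x,x,x,x) is convex on ℝⁿ. Then for any nonempty compact set D ⊂ ℝⁿ: max_{x∈D} F⁴(x,x,x,x) = max_{x,y∈D} F⁴(x,x,y,y) = max_{x,y,z,t∈D} F⁴(x,y,z,t). -/
section Aux

variable {n : ℕ} (F : Fin n → Fin n → Fin n → Fin n → ℝ)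

lemma madd1 (x x' y z t : Fin n → ℝ) :
    mform4 F (x + x') y z t = mform4 F x y z t + mform4 F x' y z t := by
  simp only [mform4, Pi.add_apply, ← Finset.sum_add_distrib]
  exact Finset.sum_congr rfl fun i _ => Finset.sum_congr rfl fun j _ =>
    Finset.sum_congr rfl fun k _ => Finset.sum_congr rfl fun l _ => by ring

lemma madd2 (x y y' z t : Fin n → ℝ) :
    mform4 F x (y + y') z t = mform4 F x y z t + mform4 F x y' z t := by
  simp only [mform4, Pi.add_apply, ← Finset.sum_add_distrib]
  exact Finset.sum_congr rfl fun i _ => Finset.sum_congr rfl fun j _ =>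
    Finset.sum_congr rfl fun k _ => Finset.sum_congr rfl fun l _ => by ring

lemma madd3 (x y z z' t : Fin n → ℝ) :
    mform4 F x y (z + z') t = mform4 F x y z t + mform4 F x y z' t := by
  simp only [mform4, Pi.add_apply, ← Finset.sum_add_distrib]
  exact Finset.sum_congr rfl fun i _ => Finset.sum_congr rfl fun j _ =>
    Finset.sum_congr rfl fun k _ => Finset.sum_congr rfl fun l _ => by ring

lemma madd4 (x y z t t' : Fin n → ℝ) :
    mform4 F x y z (t + t') = mform4 F x y z t + mform4 F x y z t' := by
  simp only [mform4, Pi.add_apply, ← Finset.sum_add_distrib]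
  exact Finset.sum_congr rfl fun i _ => Finset.sum_congr rfl fun j _ =>
    Finset.sum_congr rfl fun k _ => Finset.sum_congr rfl fun l _ => by ring

lemma msub1 (x x' y z t : Fin n → ℝ) :
    mform4 F (x - x') y z t = mform4 F x y z t - mform4 F x' y z t := by
  simp only [mform4, Pi.sub_apply, ← Finset.sum_sub_distrib]
  exact Finset.sum_congr rfl fun i _ => Finset.sum_congr rfl fun j _ =>
    Finset.sum_congr rfl fun k _ => Finset.sum_congr rfl fun l _ => by ring

lemma msub2 (x y y' z t : Fin n → ℝ) :
    mform4 F x (y - y') z t = mform4 F x y z t - mform4 F x y' z t := by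
  simp only [mform4, Pi.sub_apply, ← Finset.sum_sub_distrib]
  exact Finset.sum_congr rfl fun i _ => Finset.sum_congr rfl fun j _ =>
    Finset.sum_congr rfl fun k _ => Finset.sum_congr rfl fun l _ => by ring

lemma msub3 (x y z z' t : Fin n → ℝ) :
    mform4 F x y (z - z') t = mform4 F x y z t - mform4 F x y z' t := by
  simp only [mform4, Pi.sub_apply, ← Finset.sum_sub_distrib]
  exact Finset.sum_congr rfl fun i _ => Finset.sum_congr rfl fun j _ =>
    Finset.sum_congr rfl fun k _ => Finset.sum_congr rfl fun l _ => by ring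

lemma msub4 (x y z t t' : Fin n → ℝ) :
    mform4 F x y z (t - t') = mform4 F x y z t - mform4 F x y z t' := by
  simp only [mform4, Pi.sub_apply, ← Finset.sum_sub_distrib]
  exact Finset.sum_congr rfl fun i _ => Finset.sum_congr rfl fun j _ =>
    Finset.sum_congr rfl fun k _ => Finset.sum_congr rfl fun l _ => by ring

lemma msmul1 (c : ℝ) (x y z t : Fin n → ℝ) :
    mform4 F (c • x) y z t = c * mform4 F x y z t := by
  simp only [mform4, Pi.smul_apply, smul_eq_mul, Finset.mul_sum]
  exact Finset.sum_congr rfl fun i _ => Finset.sum_congr rfl fun j _ =>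
    Finset.sum_congr rfl fun k _ => Finset.sum_congr rfl fun l _ => by ring

lemma msmul2 (c : ℝ) (x y z t : Fin n → ℝ) :
    mform4 F x (c • y) z t = c * mform4 F x y z t := by
  simp only [mform4, Pi.smul_apply, smul_eq_mul, Finset.mul_sum]
  exact Finset.sum_congr rfl fun i _ => Finset.sum_congr rfl fun j _ =>
    Finset.sum_congr rfl fun k _ => Finset.sum_congr rfl fun l _ => by ring

lemma msmul3 (c : ℝ) (x y z t : Fin n → ℝ) :
    mform4 F x y (c • z) t = c * mform4 F x y z t := by
  simp only [mform4, Pi.smul_apply, smul_eq_mul, Finset.mul_sum]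
  exact Finset.sum_congr rfl fun i _ => Finset.sum_congr rfl fun j _ =>
    Finset.sum_congr rfl fun k _ => Finset.sum_congr rfl fun l _ => by ring

lemma msmul4 (c : ℝ) (x y z t : Fin n → ℝ) :
    mform4 F x y z (c • t) = c * mform4 F x y z t := by
  simp only [mform4, Pi.smul_apply, smul_eq_mul, Finset.mul_sum]
  exact Finset.sum_congr rfl fun i _ => Finset.sum_congr rfl fun j _ =>
    Finset.sum_congr rfl fun k _ => Finset.sum_congr rfl fun l _ => by ring

lemma mswap12 (hF : Sym4 F) (x y z t : Fin n → ℝ) :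
    mform4 F y x z t = mform4 F x y z t := by
  unfold mform4
  rw [Finset.sum_comm]
  refine Finset.sum_congr rfl fun i _ => Finset.sum_congr rfl fun j _ =>
    Finset.sum_congr rfl fun k _ => Finset.sum_congr rfl fun l _ => ?_
  have h := hF (Equiv.swap 0 1) ![i, j, k, l]
  simp [Equiv.swap_apply_def] at h
  rw [h]; ring

lemma mswap23 (hF : Sym4 F) (x y z t : Fin n → ℝ) :
    mform4 F x z y t = mform4 F x y z t := by
  unfold mform4
  refine Finset.sum_congr rfl fun i _ => ?_
  rw [Finset.sum_comm]
  refine Finset.sum_congr rfl fun j _ => Finset.sum_congr rfl fun k _ =>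
    Finset.sum_congr rfl fun l _ => ?_
  have h := hF (Equiv.swap 1 2) ![i, j, k, l]
  simp [Equiv.swap_apply_def] at h
  rw [h]; ring

lemma mswap34 (hF : Sym4 F) (x y z t : Fin n → ℝ) :
    mform4 F x y t z = mform4 F x y z t := by
  unfold mform4
  refine Finset.sum_congr rfl fun i _ => Finset.sum_congr rfl fun j _ => ?_
  rw [Finset.sum_comm]
  refine Finset.sum_congr rfl fun k _ => Finset.sum_congr rfl fun l _ => ?_
  have h := hF (Equiv.swap 2 3) ![i, j, k, l]
  simp [Equiv.swap_apply_def] at h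
  rw [h]; ring

-- canonicalization lemmas: bring any arrangement of (u,u,u,w), (u,u,w,w), (u,w,w,w)
-- to a canonical form
lemma c1 (hF : Sym4 F) (u w : Fin n → ℝ) : mform4 F u u w u = mform4 F u u u w := mswap34 F hF u u u w
lemma c2 (hF : Sym4 F) (u w : Fin n → ℝ) : mform4 F u w u u = mform4 F u u u w :=
  (mswap23 F hF u u w u).trans (c1 F hF u w)
lemma c3 (hF : Sym4 F) (u w : Fin n → ℝ) : mform4 F w u u u = mform4 F u u u w :=
  (mswap12 F hF u w u u).trans (c2 F hF u w)
lemma c4 (hF : Sym4 F) (u w : Fin n → ℝ) : mform4 F u w u w = mform4 F u u w w := mswap23 F hF u u w w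
lemma c5 (hF : Sym4 F) (u w : Fin n → ℝ) : mform4 F u w w u = mform4 F u u w w :=
  (mswap34 F hF u w u w).trans (c4 F hF u w)
lemma c6 (hF : Sym4 F) (u w : Fin n → ℝ) : mform4 F w u u w = mform4 F u u w w :=
  (mswap12 F hF u w u w).trans (c4 F hF u w)
lemma c7 (hF : Sym4 F) (u w : Fin n → ℝ) : mform4 F w u w u = mform4 F u u w w :=
  (mswap12 F hF u w w u).trans (c5 F hF u w)
lemma c8 (hF : Sym4 F) (u w : Fin n → ℝ) : mform4 F w w u u = mform4 F u u w w :=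
  (mswap23 F hF w u w u).trans (c7 F hF u w)
lemma c9 (hF : Sym4 F) (u w : Fin n → ℝ) : mform4 F w u w w = mform4 F u w w w := mswap12 F hF u w w w
lemma c10 (hF : Sym4 F) (u w : Fin n → ℝ) : mform4 F w w u w = mform4 F u w w w :=
  (mswap23 F hF w u w w).trans (c9 F hF u w)
lemma c11 (hF : Sym4 F) (u w : Fin n → ℝ) : mform4 F w w w u = mform4 F u w w w :=
  (mswap34 F hF w w u w).trans (c10 F hF u w)

lemma expand_main (hF : Sym4 F) (u w : Fin n → ℝ) :
    mform4 F (u + w) (u + w) (u + w) (u + w) + mform4 F (u - w) (u - w) (u - w) (u - w) =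
      2 * mform4 F u u u u + 12 * mform4 F u u w w + 2 * mform4 F w w w w := by
  simp only [madd1, madd2, madd3, madd4, msub1, msub2, msub3, msub4]
  simp only [c1 F hF, c2 F hF, c3 F hF, c4 F hF, c5 F hF, c6 F hF, c7 F hF, c8 F hF,
    c9 F hF, c10 F hF, c11 F hF]
  ring

lemma key_nonneg (hF : Sym4 F)
    (hconv : ConvexOn ℝ Set.univ (fun x : Fin n → ℝ => mform4 F x x x x)) (u v : Fin n → ℝ) : 0 ≤ mform4 F u u v v := by
  have hs : ∀ s : ℝ, 0 ≤ 12 * (s ^ 2 * mform4 F u u v v) +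
      2 * ((s ^ 2) ^ 2 * mform4 F v v v v) := by
    intro s
    set w : Fin n → ℝ := s • v with hw
    have hcomb : (1 / 2 : ℝ) • (u + w) + (1 / 2 : ℝ) • (u - w) = u := by module
    have h := hconv.2 (Set.mem_univ (u + w)) (Set.mem_univ (u - w))
      (by norm_num : (0:ℝ) ≤ 1 / 2) (by norm_num : (0:ℝ) ≤ 1 / 2) (by norm_num)
    rw [hcomb] at h
    have h' : mform4 F u u u u ≤
        1 / 2 * mform4 F (u + w) (u + w) (u + w) (u + w) +
        1 / 2 * mform4 F (u - w) (u - w) (u - w) (u - w) := h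
    have hexp := expand_main F hF u w
    have h2 : mform4 F u u w w = s ^ 2 * mform4 F u u v v := by
      rw [hw, msmul3, msmul4]; ring
    have h4 : mform4 F w w w w = (s ^ 2) ^ 2 * mform4 F v v v v := by
      rw [hw, msmul1, msmul2, msmul3, msmul4]; ring
    rw [h2, h4] at hexp
    linarith
  have hs' : ∀ q : ℝ, 0 ≤ q → 0 ≤ 12 * (q * mform4 F u u v v) +
      2 * (q ^ 2 * mform4 F v v v v) := by
    intro q hq
    have h := hs (Real.sqrt q)
    rwa [Real.sq_sqrt hq] at h
  by_contra hcon
  push_neg at hcon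
  set c := mform4 F u u v v with hc
  set e := mform4 F v v v v with he
  rcases le_or_gt e 0 with h0 | h0
  · have := hs' 1 (by norm_num)
    nlinarith
  · have hq : (0:ℝ) ≤ -3 * c / e := div_nonneg (by linarith) h0.le
    have h := hs' (-3 * c / e) hq
    have hval : 12 * (-3 * c / e * c) + 2 * ((-3 * c / e) ^ 2 * e) = -18 * c ^ 2 / e := by
      field_simp; ring
    rw [hval] at h
    have h3 : (0:ℝ) ≤ -18 * c ^ 2 := by
      by_contra h4
      push_neg at h4
      have : -18 * c ^ 2 / e < 0 := div_neg_of_neg_of_pos h4 h0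
      linarith
    have h5 : 0 < c * c := mul_pos_of_neg_of_neg hcon hcon
    nlinarith

lemma pair_bound (hF : Sym4 F)
    (hconv : ConvexOn ℝ Set.univ (fun x : Fin n → ℝ => mform4 F x x x x)) (x y : Fin n → ℝ) :
    2 * mform4 F x x y y ≤ mform4 F x x x x + mform4 F y y y y := by
  have h := key_nonneg F hF hconv (x + y) (x - y)
  have hexp : mform4 F (x + y) (x + y) (x - y) (x - y) =
      mform4 F x x x x + mform4 F y y y y - 2 * mform4 F x x y y := by
    simp only [madd1, madd2, msub3, msub4]
    simp only [c1 F hF, c2 F hF, c3 F hF, c4 F hF, c5 F hF, c6 F hF, c7 F hF, c8 F hF,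
      c9 F hF, c10 F hF, c11 F hF]
    ring
  linarith

lemma cs1 (hF : Sym4 F)
    (hconv : ConvexOn ℝ Set.univ (fun x : Fin n → ℝ => mform4 F x x x x)) (x y v : Fin n → ℝ) :
    2 * mform4 F x y v v ≤ mform4 F x x v v + mform4 F y y v v := by
  have h := key_nonneg F hF hconv (x - y) v
  have hexp : mform4 F (x - y) (x - y) v v =
      mform4 F x x v v - 2 * mform4 F x y v v + mform4 F y y v v := by
    simp only [msub1, msub2]
    rw [mswap12 F hF x y v v]
    ring
  linarith

lemma cs2 (hF : Sym4 F)
    (hconv : ConvexOn ℝ Set.univ (fun x : Fin n → ℝ => mform4 F x x x x)) (x y v : Fin n → ℝ) :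
    -(mform4 F x x v v + mform4 F y y v v) ≤ 2 * mform4 F x y v v := by
  have h := key_nonneg F hF hconv (x + y) v
  have hexp : mform4 F (x + y) (x + y) v v =
      mform4 F x x v v + 2 * mform4 F x y v v + mform4 F y y v v := by
    simp only [madd1, madd2]
    rw [mswap12 F hF x y v v]
    ring
  linarith

lemma qsplit (hF : Sym4 F) (x y z t : Fin n → ℝ) :
    4 * mform4 F x y z t =
      mform4 F x y (z + t) (z + t) - mform4 F x y (z - t) (z - t) := by
  simp only [madd3, madd4, msub3, msub4]
  rw [mswap34 F hF x y z t]
  ring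

lemma par (hF : Sym4 F) (w z t : Fin n → ℝ) :
    mform4 F w w (z + t) (z + t) + mform4 F w w (z - t) (z - t) =
      2 * mform4 F w w z z + 2 * mform4 F w w t t := by
  simp only [madd3, madd4, msub3, msub4]
  rw [mswap34 F hF w w z t]
  ring

lemma final_bound (hF : Sym4 F)
    (hconv : ConvexOn ℝ Set.univ (fun x : Fin n → ℝ => mform4 F x x x x)) (x y z t : Fin n → ℝ) :
    4 * mform4 F x y z t ≤ mform4 F x x x x + mform4 F y y y y +
      mform4 F z z z z + mform4 F t t t t := by
  have h1 := cs1 F hF hconv x y (z + t)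
  have h2 := cs2 F hF hconv x y (z - t)
  have hq := qsplit F hF x y z t
  have hpx := par F hF x z t
  have hpy := par F hF y z t
  have p1 := pair_bound F hF hconv x z
  have p2 := pair_bound F hF hconv x t
  have p3 := pair_bound F hF hconv y z
  have p4 := pair_bound F hF hconv y t
  linarith

lemma contS : Continuous fun x : Fin n → ℝ => mform4 F x x x x := by
  unfold mform4
  refine continuous_finset_sum _ fun i _ => continuous_finset_sum _ fun j _ =>
    continuous_finset_sum _ fun k _ => continuous_finset_sum _ fun l _ => ?_
  exact ((((continuous_const.mul (continuous_apply i)).mul (continuous_apply j)).mul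
    (continuous_apply k)).mul (continuous_apply l))

end Aux

/-- If the score function of a symmetric fourth-order tensor is convex, then for any
nonempty compact set `D`, the maximum of the score over `D` equals the maximum of the
multilinear form over `D × D` (two arguments paired) and over `D⁴`. -/
theorem stmt_8 {n : ℕ} (F : Fin n → Fin n → Fin n → Fin n → ℝ) (hF : Sym4 F)
    (hconv : ConvexOn ℝ Set.univ (fun x : Fin n → ℝ => mform4 F x x x x))
    (D : Set (Fin n → ℝ)) (hD : IsCompact D) (hne : D.Nonempty) :
    sSup {r : ℝ | ∃ x ∈ D, r = mform4 F x x x x} =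
        sSup {r : ℝ | ∃ x ∈ D, ∃ y ∈ D, r = mform4 F x x y y} ∧
      sSup {r : ℝ | ∃ x ∈ D, r = mform4 F x x x x} =
        sSup {r : ℝ | ∃ x ∈ D, ∃ y ∈ D, ∃ z ∈ D, ∃ t ∈ D, r = mform4 F x y z t} := by
  obtain ⟨x0, hx0⟩ := hne
  have himg : {r : ℝ | ∃ x ∈ D, r = mform4 F x x x x} =
      (fun x : Fin n → ℝ => mform4 F x x x x) '' D := by
    ext r; simp [Set.mem_image, eq_comm]
  have hbdd1 : BddAbove {r : ℝ | ∃ x ∈ D, r = mform4 F x x x x} := by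
    rw [himg]; exact (hD.image (contS F)).bddAbove
  have hne1 : ({r : ℝ | ∃ x ∈ D, r = mform4 F x x x x}).Nonempty :=
    ⟨_, x0, hx0, rfl⟩
  set M := sSup {r : ℝ | ∃ x ∈ D, r = mform4 F x x x x} with hM
  have hle : ∀ x ∈ D, mform4 F x x x x ≤ M := fun x hx => le_csSup hbdd1 ⟨x, hx, rfl⟩
  have hub2 : ∀ r ∈ {r : ℝ | ∃ x ∈ D, ∃ y ∈ D, r = mform4 F x x y y}, r ≤ M := by
    rintro r ⟨x, hx, y, hy, rfl⟩
    have := pair_bound F hF hconv x y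
    linarith [hle x hx, hle y hy]
  have hub3 : ∀ r ∈ {r : ℝ | ∃ x ∈ D, ∃ y ∈ D, ∃ z ∈ D, ∃ t ∈ D, r = mform4 F x y z t},
      r ≤ M := by
    rintro r ⟨x, hx, y, hy, z, hz, t, ht, rfl⟩
    have := final_bound F hF hconv x y z t
    linarith [hle x hx, hle y hy, hle z hz, hle t ht]
  constructor
  · apply le_antisymm
    · refine csSup_le_csSup ⟨M, hub2⟩ hne1 ?_
      rintro r ⟨x, hx, rfl⟩
      exact ⟨x, hx, x, hx, rfl⟩
    · exact csSup_le ⟨_, x0, hx0, x0, hx0, rfl⟩ hub2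
  · apply le_antisymm
    · refine csSup_le_csSup ⟨M, hub3⟩ hne1 ?_
      rintro r ⟨x, hx, rfl⟩
      exact ⟨x, hx, x, hx, x, hx, x, hx, rfl⟩
    · exact csSup_le ⟨_, x0, hx0, x0, hx0, x0, hx0, x0, hx0, rfl⟩ hub3
end
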